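/- Let d ≥ 1, let σ²: Fin d → ℝ≥0, let μ be the product measure on ℝ^d whose i-th coordinate is the centered real Gaussian measure with variance σᵢ², let ε > 0, and let w* ∈ ℝ^d. Define the robust standard risk minimizer w^R ∈ ℝ^d by w^R_i = w*_i if σᵢ² > 0 and w^R_i = 0 otherwise. Then for every w ∈ ℝ^d with wᵢ = w*ᵢ for all i with σᵢ² > 0, one has R_a(w) = (ε²/2)·‖w‖₂² ≥ (ε²/2)·‖w^R‖₂² = R_a(w^R), with equality if and only if w = w^R; that is, w^R is the unique minimizer of the adversarial risk among all standard risk minimizers. -/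

import Mathlib

open MeasureTheory ProbabilityTheory
open scoped NNReal

/-- The adversarial risk under the product Gaussian measure. -/
noncomputable def advRisk (d : ℕ) (σsq : Fin d → ℝ≥0) (wstar : Fin d → ℝ) (ε : ℝ)
    (w : Fin d → ℝ) : ℝ :=
  ∫ x : Fin d → ℝ,
      sSup ((fun (Δ : Fin d → ℝ) =>
          (1/2) * ((∑ i, x i * (w i - wstar i)) + ∑ i, Δ i * w i)^2) ''
        {Δ | Real.sqrt (∑ i, (Δ i)^2) ≤ ε})
      ∂(Measure.pi fun i => gaussianReal 0 (σsq i))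

lemma sup_eq_aux (d : ℕ) (w : Fin d → ℝ) (ε : ℝ) (hε : 0 < ε) :
    sSup ((fun (Δ : Fin d → ℝ) => (1/2) * ((0:ℝ) + ∑ i, Δ i * w i)^2) ''
      {Δ | Real.sqrt (∑ i, (Δ i)^2) ≤ ε}) = ε^2 / 2 * ∑ i, (w i)^2 := by
  set S := ∑ i, (w i)^2 with hSdef
  have hS : (0:ℝ) ≤ S := Finset.sum_nonneg fun i _ => sq_nonneg _
  apply IsGreatest.csSup_eq
  constructor
  · rcases eq_or_lt_of_le hS with h0 | h0
    · refine ⟨0, by simp [hε.le], ?_⟩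
      show (1/2 : ℝ) * ((0:ℝ) + ∑ i, (0:Fin d → ℝ) i * w i)^2 = ε^2 / 2 * S
      simp [← h0]
    · have hs : 0 < Real.sqrt S := Real.sqrt_pos.mpr h0
      refine ⟨fun i => (ε / Real.sqrt S) * w i, ?_, ?_⟩
      · show Real.sqrt (∑ i, ((ε / Real.sqrt S) * w i)^2) ≤ ε
        have h1 : ∑ i, ((ε / Real.sqrt S) * w i)^2 = ε^2 := by
          simp only [mul_pow]
          rw [← Finset.mul_sum, ← hSdef, div_pow, Real.sq_sqrt hS,
            div_mul_cancel₀ _ (ne_of_gt h0)]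
        rw [h1, Real.sqrt_sq hε.le]
      · show (1/2 : ℝ) * ((0:ℝ) + ∑ i, ((ε / Real.sqrt S) * w i) * w i)^2 = ε^2 / 2 * S
        have h1 : ∑ i, ((ε / Real.sqrt S) * w i) * w i = (ε / Real.sqrt S) * S := by
          rw [Finset.mul_sum]
          exact Finset.sum_congr rfl fun i _ => by ring
        rw [zero_add, h1, mul_pow, div_pow, Real.sq_sqrt hS]
        field_simp
  · rintro y ⟨Δ, hΔ, rfl⟩
    show (1/2 : ℝ) * ((0:ℝ) + ∑ i, Δ i * w i)^2 ≤ ε^2 / 2 * S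
    rw [zero_add]
    have hcs : (∑ i, Δ i * w i)^2 ≤ (∑ i, (Δ i)^2) * S :=
      Finset.sum_mul_sq_le_sq_mul_sq _ _ _
    have hΔ2 : ∑ i, (Δ i)^2 ≤ ε^2 := by
      have hnn : (0:ℝ) ≤ ∑ i, (Δ i)^2 := Finset.sum_nonneg fun i _ => sq_nonneg _
      calc ∑ i, (Δ i)^2 = (Real.sqrt (∑ i, (Δ i)^2))^2 := (Real.sq_sqrt hnn).symm
        _ ≤ ε^2 := pow_le_pow_left₀ (Real.sqrt_nonneg _) hΔ 2
    nlinarith [mul_le_mul_of_nonneg_right hΔ2 hS]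

lemma ae_sum_zero (d : ℕ) (σsq : Fin d → ℝ≥0) (wstar w : Fin d → ℝ)
    (hw : ∀ i, 0 < σsq i → w i = wstar i) :
    ∀ᵐ x : Fin d → ℝ ∂(Measure.pi fun i => gaussianReal 0 (σsq i)),
      ∑ i, x i * (w i - wstar i) = 0 := by
  have h : ∀ᵐ x : Fin d → ℝ ∂(Measure.pi fun i => gaussianReal 0 (σsq i)),
      ∀ i, σsq i = 0 → x i = 0 := by
    rw [ae_all_iff]
    intro i
    rcases eq_zero_or_pos (σsq i) with hi | hi
    · have hnull : (Measure.pi fun i => gaussianReal 0 (σsq i))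
          {x : Fin d → ℝ | ¬ x i = 0} = 0 := by
        have : (gaussianReal 0 (σsq i)) {y : ℝ | y ≠ 0} = 0 := by
          rw [hi, gaussianReal_zero_var,
            show {y : ℝ | y ≠ 0} = ({0}ᶜ : Set ℝ) from rfl,
            Measure.dirac_apply' _ (measurableSet_singleton (0:ℝ)).compl]
          simp
        exact Measure.pi_eval_preimage_null (μ := fun j => gaussianReal 0 (σsq j)) this
      filter_upwards [measure_eq_zero_iff_ae_notMem.mp hnull] with x hx _
      simpa using hx
    · filter_upwards with x h0
      exact absurd h0 (ne_of_gt hi)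
  filter_upwards [h] with x hx
  apply Finset.sum_eq_zero
  intro i _
  rcases eq_zero_or_pos (σsq i) with hi | hi
  · rw [hx i hi, zero_mul]
  · rw [hw i hi, sub_self, mul_zero]

lemma advRisk_eq (d : ℕ) (σsq : Fin d → ℝ≥0) (ε : ℝ) (hε : 0 < ε) (wstar : Fin d → ℝ)
    (w : Fin d → ℝ) (hw : ∀ i, 0 < σsq i → w i = wstar i) :
    advRisk d σsq wstar ε w = ε^2 / 2 * ∑ i, (w i)^2 := by
  unfold advRisk
  rw [integral_congr_ae (g := fun _ => ε^2 / 2 * ∑ i, (w i)^2) ?_]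
  · simp
  · filter_upwards [ae_sum_zero d σsq wstar w hw] with x hx
    simp only [hx]
    exact sup_eq_aux d w ε hε

/-- The robust standard risk minimizer `w^R` (equal to `w*` on relevant
frequencies and `0` elsewhere) is the unique minimizer of the adversarial risk
among all standard risk minimizers, whose adversarial risks are `(ε²/2)‖·‖₂²`. -/
theorem robust_minimizer_unique (d : ℕ) (hd : 1 ≤ d)
    (σsq : Fin d → ℝ≥0) (ε : ℝ) (hε : 0 < ε) (wstar : Fin d → ℝ)
    (wR : Fin d → ℝ) (hwR : ∀ i, wR i = if 0 < σsq i then wstar i else 0) :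
    ∀ w : Fin d → ℝ, (∀ i, 0 < σsq i → w i = wstar i) →
      advRisk d σsq wstar ε w = ε^2 / 2 * ∑ i, (w i)^2 ∧
      advRisk d σsq wstar ε wR = ε^2 / 2 * ∑ i, (wR i)^2 ∧
      ε^2 / 2 * ∑ i, (wR i)^2 ≤ ε^2 / 2 * ∑ i, (w i)^2 ∧
      (advRisk d σsq wstar ε w = advRisk d σsq wstar ε wR ↔ w = wR) := by
  intro w hw
  have hwR' : ∀ i, 0 < σsq i → wR i = wstar i := fun i hi => by
    rw [hwR i, if_pos hi]
  have h1 := advRisk_eq d σsq ε hε wstar w hw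
  have h2 := advRisk_eq d σsq ε hε wstar wR hwR'
  have hterm : ∀ i, (wR i)^2 ≤ (w i)^2 := by
    intro i
    rcases eq_zero_or_pos (σsq i) with hi | hi
    · rw [hwR i, if_neg (by simp [hi])]
      simpa using sq_nonneg (w i)
    · rw [hwR' i hi, hw i hi]
  have hsum : ∑ i, (wR i)^2 ≤ ∑ i, (w i)^2 :=
    Finset.sum_le_sum fun i _ => hterm i
  have hc : (0:ℝ) < ε^2 / 2 := by positivity
  refine ⟨h1, h2, mul_le_mul_of_nonneg_left hsum hc.le, ?_⟩
  rw [h1, h2]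
  constructor
  · intro heq
    have hsum_eq : ∑ i, (w i)^2 = ∑ i, (wR i)^2 :=
      mul_left_cancel₀ (ne_of_gt hc) heq
    have hall : ∀ i ∈ Finset.univ, (w i)^2 - (wR i)^2 = 0 := by
      rw [← Finset.sum_eq_zero_iff_of_nonneg
        (fun i _ => sub_nonneg.mpr (hterm i))]
      rw [Finset.sum_sub_distrib, hsum_eq, sub_self]
    funext i
    rcases eq_zero_or_pos (σsq i) with hi | hi
    · have h0 : wR i = 0 := by rw [hwR i, if_neg (by simp [hi])]
      have := hall i (Finset.mem_univ i)
      rw [h0] at this ⊢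
      nlinarith [sq_nonneg (w i)]
    · rw [hw i hi, hwR' i hi]
  · intro heq; rw [heq]
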